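/- The functions W_k defined by W_k(z) := α^k ∫_{D_k(z)} (t_1 ⋯ t_k)^{-α-1} dt on z ∈ (k-1, k) satisfy the recursion W_k(z) = α ∫_{z-(k-1)}^1 W_{k-1}(z - t) t^{-α-1} dt for z ∈ (k-1, k) and k ≥ 1, where W_0 ≡ 1. -/

import Mathlib

open MeasureTheory Real

/-- The simplex `D_k(z) = {t ∈ ℝ^k : max_j t_j < 1, t_1 + ⋯ + t_k > z}`. -/
def Dset (k : ℕ) (z : ℝ) : Set (Fin k → ℝ) :=
  {t | (∀ j, t j < 1) ∧ z < ∑ j, t j}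

/-- `W_k(z) = α^k ∫_{D_k(z)} (t_1 ⋯ t_k)^{-α-1} dt`, with `W_0 ≡ 1`. -/
noncomputable def W (α : ℝ) : ℕ → ℝ → ℝ
  | 0, _ => 1
  | (k + 1), z => α ^ (k + 1) * ∫ t in Dset (k + 1) z, (∏ j, t j) ^ (-α - 1)

lemma Dset_measurable (k : ℕ) (z : ℝ) : MeasurableSet (Dset k z) := by
  have h1 : MeasurableSet {t : Fin k → ℝ | ∀ j, t j < 1} := by
    rw [Set.setOf_forall]
    exact MeasurableSet.iInter fun j =>
      measurableSet_lt (measurable_pi_apply j) measurable_const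
  have h2 : MeasurableSet {t : Fin k → ℝ | z < ∑ j, t j} :=
    measurableSet_lt measurable_const (Finset.measurable_sum _ fun j _ => measurable_pi_apply j)
  exact h1.inter h2

lemma Dset_eq_empty {k : ℕ} {w : ℝ} (hw : (k : ℝ) ≤ w) : Dset k w = ∅ := by
  ext t
  simp only [Dset, Set.mem_setOf_eq, Set.mem_empty_iff_false, iff_false, not_and]
  intro h1 h2
  have hsum : ∑ j, t j ≤ (k : ℝ) := by
    calc ∑ j, t j ≤ ∑ _j : Fin k, (1 : ℝ) := Finset.sum_le_sum fun j _ => (h1 j).le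
      _ = (k : ℝ) := by simp
  linarith

lemma Dset_subset_box {k : ℕ} {w : ℝ} :
    Dset k w ⊆ Set.univ.pi fun _ => Set.Ioo (w - ((k : ℝ) - 1)) 1 := by
  rintro t ⟨h1, h2⟩ j _
  refine ⟨?_, h1 j⟩
  have hk : 1 ≤ k := j.pos
  have hsum : ∑ i ∈ Finset.univ.erase j, t i ≤ (k : ℝ) - 1 := by
    calc ∑ i ∈ Finset.univ.erase j, t i ≤ ∑ _i ∈ Finset.univ.erase j, (1 : ℝ) :=
        Finset.sum_le_sum fun i _ => (h1 i).le
      _ = (k : ℝ) - 1 := by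
        rw [Finset.sum_const, Finset.card_erase_of_mem (Finset.mem_univ j)]
        simp only [Finset.card_univ, Fintype.card_fin, nsmul_eq_mul, mul_one]
        push_cast [Nat.cast_sub hk]
        ring
  have htot := Finset.add_sum_erase Finset.univ t (Finset.mem_univ j)
  linarith

lemma f_measurable (α : ℝ) (k : ℕ) :
    Measurable fun t : Fin k → ℝ => (∏ j, t j) ^ (-α - 1) :=
  (Finset.measurable_prod _ fun j _ => measurable_pi_apply j).pow measurable_const

lemma f_integrableOn (α : ℝ) (hα : 0 < α) {k : ℕ} {w : ℝ}
    (hw : w ∈ Set.Ioo ((k : ℝ) - 1) (k : ℝ)) :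
    IntegrableOn (fun t : Fin k → ℝ => (∏ j, t j) ^ (-α - 1)) (Dset k w) := by
  set c : ℝ := w - ((k : ℝ) - 1) with hc
  have hc0 : 0 < c := by simp only [hc]; linarith [hw.1]
  have hbox : Dset k w ⊆ Set.univ.pi fun _ => Set.Ioo c 1 := Dset_subset_box
  have hfin : volume (Dset k w) ≠ ⊤ := by
    refine ne_top_of_le_ne_top ?_ (measure_mono hbox)
    rw [volume_pi_pi]
    exact (ENNReal.prod_lt_top fun _ _ => by simp [Real.volume_Ioo]).ne
  refine Measure.integrableOn_of_bounded (M := (c ^ k) ^ (-α - 1)) hfin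
    ((f_measurable α k).aestronglyMeasurable) ?_
  filter_upwards [ae_restrict_mem (Dset_measurable k w)] with t ht
  have hcoord : ∀ j, c < t j := fun j => (hbox ht j (Set.mem_univ j)).1
  have hprodpos : (0 : ℝ) < ∏ j, t j :=
    Finset.prod_pos fun j _ => lt_trans hc0 (hcoord j)
  have hle : c ^ k ≤ ∏ j, t j := by
    calc c ^ k = ∏ _j : Fin k, c := by simp
      _ ≤ ∏ j, t j := Finset.prod_le_prod (fun _ _ => hc0.le) fun j _ => (hcoord j).le
  rw [Real.norm_eq_abs, abs_of_nonneg (Real.rpow_nonneg hprodpos.le _)]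
  exact Real.rpow_le_rpow_of_nonpos (pow_pos hc0 k) hle (by linarith)

lemma W_eq (α : ℝ) (m : ℕ) (w : ℝ) (hw : w ∈ Set.Ioo ((m : ℝ) - 1) (m : ℝ)) :
    W α m w = α ^ m * ∫ s in Dset m w, (∏ j, s j) ^ (-α - 1) := by
  cases m with
  | zero =>
    have h : Dset 0 w = Set.univ := by
      ext t
      simp only [Dset, Set.mem_setOf_eq, Set.mem_univ, iff_true]
      exact ⟨fun j => j.elim0, by simpa using hw.2⟩
    have hv : (volume : Measure (Fin 0 → ℝ)) Set.univ = 1 := by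
      rw [MeasureTheory.volume_pi, Measure.pi_univ]; simp
    simp only [W, pow_zero, one_mul, h, Finset.univ_eq_empty, Finset.prod_empty,
      Real.one_rpow, Measure.restrict_univ]
    rw [integral_const, measureReal_def, hv]
    simp
  | succ n => rfl

/-- the recursion
`W_k(z) = α ∫_{z-(k-1)}^1 W_{k-1}(z - t) t^{-α-1} dt` for `z ∈ (k-1, k)`, `k ≥ 1`. -/
theorem stmt2 (α : ℝ) (hα : 0 < α) (k : ℕ) (hk : 1 ≤ k)
    (z : ℝ) (hz : z ∈ Set.Ioo ((k : ℝ) - 1) (k : ℝ)) :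
    W α k z = α * ∫ t in Set.Ioo (z - ((k : ℝ) - 1)) 1, W α (k - 1) (z - t) * t ^ (-α - 1) := by
  obtain ⟨m, rfl⟩ : ∃ m, k = m + 1 := ⟨k - 1, (Nat.succ_pred_eq_of_pos hk).symm⟩
  obtain ⟨hz1, hz2⟩ := hz
  push_cast at hz1 hz2
  have hcast : ((m + 1 : ℕ) : ℝ) - 1 = (m : ℝ) := by push_cast; ring
  rw [hcast]
  simp only [Nat.add_sub_cancel]
  set p : ℝ := -α - 1 with hp
  set c : ℝ := z - (m : ℝ) with hc
  have hc0 : 0 < c := by simp only [hc]; linarith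
  have hc1 : c < 1 := by simp only [hc]; linarith
  set D := Dset (m + 1) z with hDdef
  have hD : MeasurableSet D := Dset_measurable _ _
  have hzIoo : z ∈ Set.Ioo (((m + 1 : ℕ) : ℝ) - 1) ((m + 1 : ℕ) : ℝ) := by
    constructor <;> push_cast <;> linarith
  have hfint : IntegrableOn (fun t : Fin (m + 1) → ℝ => (∏ j, t j) ^ p) D :=
    f_integrableOn α hα hzIoo
  set e := MeasurableEquiv.piFinSuccAbove (fun _ : Fin (m + 1) => ℝ) 0 with he
  have hmp : MeasurePreserving e.symm
      ((volume : Measure ℝ).prod (volume : Measure (Fin m → ℝ))) volume :=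
    (volume_preserving_piFinSuccAbove (fun _ : Fin (m + 1) => ℝ) 0).symm
  have hesymm : ∀ q : ℝ × (Fin m → ℝ), e.symm q = Fin.cons q.1 q.2 := by
    intro q
    simp [he, MeasurableEquiv.piFinSuccAbove, Fin.insertNthEquiv, Fin.insertNth_zero]
  have key_mem : ∀ (t : ℝ) (s : Fin m → ℝ),
      (Fin.cons t s : Fin (m + 1) → ℝ) ∈ D ↔ t < 1 ∧ s ∈ Dset m (z - t) := by
    intro t s
    simp only [hDdef, Dset, Set.mem_setOf_eq, Fin.forall_fin_succ, Fin.cons_zero, Fin.cons_succ,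
      Fin.sum_univ_succ]
    constructor
    · rintro ⟨⟨h1, h2⟩, h3⟩; exact ⟨h1, h2, by linarith⟩
    · rintro ⟨h1, h2, h3⟩; exact ⟨⟨h1, h2⟩, by linarith⟩
  have key_val : ∀ (t : ℝ) (s : Fin m → ℝ),
      (∏ j, (Fin.cons t s : Fin (m + 1) → ℝ) j) = t * ∏ j, s j := by
    intro t s
    simp [Fin.prod_univ_succ]
  set T : Set (ℝ × (Fin m → ℝ)) := {q | q.1 < 1 ∧ q.2 ∈ Dset m (z - q.1)} with hT
  have hTmem : ∀ (t : ℝ) (s : Fin m → ℝ), ((t, s) ∈ T) ↔ (t < 1 ∧ s ∈ Dset m (z - t)) :=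
    fun _ _ => Iff.rfl
  set φ : ℝ × (Fin m → ℝ) → ℝ := fun q => (q.1 * ∏ j, q.2 j) ^ p with hφ
  set F : ℝ × (Fin m → ℝ) → ℝ := Set.indicator T φ with hF
  have hFeq : ∀ q : ℝ × (Fin m → ℝ),
      Set.indicator D (fun t : Fin (m + 1) → ℝ => (∏ j, t j) ^ p) (e.symm q) = F q := by
    intro q
    rw [hesymm q]
    by_cases h : q.1 < 1 ∧ q.2 ∈ Dset m (z - q.1)
    · have hq : (Fin.cons q.1 q.2 : Fin (m + 1) → ℝ) ∈ D := (key_mem q.1 q.2).mpr h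
      rw [Set.indicator_of_mem hq,
        show F q = φ q from Set.indicator_of_mem (show q ∈ T from h) φ]
      show (∏ j, (Fin.cons q.1 q.2 : Fin (m + 1) → ℝ) j) ^ p = (q.1 * ∏ j, q.2 j) ^ p
      rw [key_val]
    · have hq : (Fin.cons q.1 q.2 : Fin (m + 1) → ℝ) ∉ D := fun hh => h ((key_mem q.1 q.2).mp hh)
      rw [Set.indicator_of_notMem hq,
        show F q = 0 from Set.indicator_of_notMem (show q ∉ T from h) φ]
  have hFint : Integrable F ((volume : Measure ℝ).prod (volume : Measure (Fin m → ℝ))) := by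
    have h1 : Integrable ((Set.indicator D fun t : Fin (m + 1) → ℝ => (∏ j, t j) ^ p) ∘ e.symm)
        ((volume : Measure ℝ).prod (volume : Measure (Fin m → ℝ))) :=
      (hmp.integrable_comp_emb (MeasurableEquiv.measurableEmbedding _)).mpr
        ((integrable_indicator_iff hD).mpr hfint)
    have h2 : ((Set.indicator D fun t : Fin (m + 1) → ℝ => (∏ j, t j) ^ p) ∘ e.symm) = F :=
      funext fun q => hFeq q
    rwa [h2] at h1
  have step1 : (∫ x in D, (∏ j, x j) ^ p) =
      ∫ q, F q ∂((volume : Measure ℝ).prod (volume : Measure (Fin m → ℝ))) := by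
    rw [← integral_indicator hD,
      ← hmp.integral_comp (MeasurableEquiv.measurableEmbedding _)
        (Set.indicator D fun t : Fin (m + 1) → ℝ => (∏ j, t j) ^ p)]
    exact integral_congr_ae (Filter.Eventually.of_forall hFeq)
  have step2 : (∫ q, F q ∂((volume : Measure ℝ).prod (volume : Measure (Fin m → ℝ))))
      = ∫ t : ℝ, ∫ s : Fin m → ℝ, F (t, s) := integral_prod F hFint
  have hinner : ∀ t : ℝ, (∫ s : Fin m → ℝ, F (t, s)) =
      Set.indicator (Set.Ioo c 1)
        (fun t => (∫ s in Dset m (z - t), (∏ j, s j) ^ p) * t ^ p) t := by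
    intro t
    by_cases ht1 : t < 1
    · by_cases ht2 : c < t
      · rw [Set.indicator_of_mem (show t ∈ Set.Ioo c 1 from ⟨ht2, ht1⟩)]
        have ht0 : 0 < t := lt_trans hc0 ht2
        have hzt : z - t ∈ Set.Ioo ((m : ℝ) - 1) (m : ℝ) := by
          constructor
          · linarith
          · simp only [hc] at ht2; linarith
        have hs' : Dset m (z - t) ⊆ Set.univ.pi fun _ => Set.Ioo (z - t - ((m : ℝ) - 1)) 1 :=
          Dset_subset_box
        have hpos : ∀ s ∈ Dset m (z - t), (0 : ℝ) ≤ ∏ j, s j := by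
          intro s hs
          refine (Finset.prod_pos fun j _ => ?_).le
          have h1 := (hs' hs j (Set.mem_univ j)).1
          have h2 : (0 : ℝ) < z - t - ((m : ℝ) - 1) := by linarith [hzt.1]
          linarith
        have hsF : ∀ s : Fin m → ℝ, F (t, s) =
            Set.indicator (Dset m (z - t)) (fun s => t ^ p * (∏ j, s j) ^ p) s := by
          intro s
          by_cases hs : s ∈ Dset m (z - t)
          · rw [show F (t, s) = φ (t, s) from
              Set.indicator_of_mem (show (t, s) ∈ T from ⟨ht1, hs⟩) φ,
              Set.indicator_of_mem hs]
            show (t * ∏ j, s j) ^ p = t ^ p * (∏ j, s j) ^ p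
            exact Real.mul_rpow ht0.le (hpos s hs)
          · rw [show F (t, s) = 0 from
              Set.indicator_of_notMem (show (t, s) ∉ T from fun h => hs h.2) φ,
              Set.indicator_of_notMem hs]
        simp only [hsF]
        rw [integral_indicator (Dset_measurable m (z - t)), integral_const_mul]
        ring
      · rw [Set.indicator_of_notMem (show t ∉ Set.Ioo c 1 from fun h => ht2 h.1)]
        have hempty : Dset m (z - t) = ∅ := by
          apply Dset_eq_empty
          push_neg at ht2
          simp only [hc] at ht2
          linarith
        have hsF : ∀ s : Fin m → ℝ, F (t, s) = 0 := by
          intro s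
          refine Set.indicator_of_notMem (show (t, s) ∉ T from fun h => ?_) φ
          have := h.2
          rw [hempty] at this
          exact this
        simp only [hsF]
        exact integral_zero _ _
    · rw [Set.indicator_of_notMem (show t ∉ Set.Ioo c 1 from fun h => ht1 h.2)]
      have hsF : ∀ s : Fin m → ℝ, F (t, s) = 0 := fun s =>
        Set.indicator_of_notMem (show (t, s) ∉ T from fun h => ht1 h.1) φ
      simp only [hsF]
      exact integral_zero _ _
  have step3 : (∫ t : ℝ, ∫ s : Fin m → ℝ, F (t, s))
      = ∫ t in Set.Ioo c 1, (∫ s in Dset m (z - t), (∏ j, s j) ^ p) * t ^ p := by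
    rw [← integral_indicator measurableSet_Ioo]
    exact integral_congr_ae (Filter.Eventually.of_forall hinner)
  have lhs_eq : W α (m + 1) z = α ^ (m + 1) * ∫ x in D, (∏ j, x j) ^ p := rfl
  rw [lhs_eq, step1, step2, step3]
  rw [pow_succ, mul_comm (α ^ m) α, mul_assoc, ← integral_const_mul]
  congr 1
  refine setIntegral_congr_fun measurableSet_Ioo fun t ht => ?_
  have hzt : z - t ∈ Set.Ioo ((m : ℝ) - 1) (m : ℝ) := by
    obtain ⟨ht2, ht1⟩ := ht
    constructor
    · linarith
    · simp only [hc] at ht2; linarith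
  rw [W_eq α m (z - t) hzt]
  ring
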